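/- Let B₂ = B(x₂, r₂) ⊆ B(0,1) ⊆ ℝ^D with |x₂| + r₂ < 1. Define s(x) = x + x₂·(1−|x|)/(1−r₂) for r₂ < |x| ≤ 1 and s(x) = x + x₂ for |x| ≤ r₂. Then s maps B(0,1) to itself, equals the translation x ↦ x + x₂ on B(0, r₂), equals the identity on ∂B(0,1), and is C-bi-Lipschitz with C = (1 − |x₂|/(1−r₂))^{−1}. -/

import Mathlib

open Metric

private lemma gdiff_aux (r₂ : ℝ) (hr1 : r₂ < 1) (s t : ℝ) :
    |(if s ≤ r₂ then (1:ℝ) else (1 - s) / (1 - r₂)) -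
      (if t ≤ r₂ then (1:ℝ) else (1 - t) / (1 - r₂))| ≤ |s - t| / (1 - r₂) := by
  have hc : (0:ℝ) < 1 - r₂ := by linarith
  split_ifs with h1 h2 h2
  · simp; positivity
  · push_neg at h2
    have he : 1 - (1 - t) / (1 - r₂) = (t - r₂) / (1 - r₂) := by field_simp; ring
    rw [he, abs_of_nonneg (by apply div_nonneg <;> linarith)]
    gcongr
    rw [abs_sub_comm]
    calc t - r₂ ≤ t - s := by linarith
      _ ≤ |t - s| := le_abs_self _
  · push_neg at h1
    have he : (1 - s) / (1 - r₂) - 1 = -((s - r₂) / (1 - r₂)) := by field_simp; ring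
    rw [he, abs_neg, abs_of_nonneg (by apply div_nonneg <;> linarith)]
    gcongr
    calc s - r₂ ≤ s - t := by linarith
      _ ≤ |s - t| := le_abs_self _
  · have he : (1 - s) / (1 - r₂) - (1 - t) / (1 - r₂) = (t - s) / (1 - r₂) := by
      field_simp; ring
    rw [he, abs_div, abs_of_pos hc, abs_sub_comm]

/-- The repositioning map: with `B(x₂,r₂) ⊆ B(0,1)`, the map
`s(x) = x + x₂·(1−|x|)/(1−r₂)` for `|x| > r₂` and `s(x) = x + x₂` for `|x| ≤ r₂`
sends `B(0,1)` to itself, is the translation by `x₂` on `B(0,r₂)`, the identity on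
the unit sphere, and is `C`-bi-Lipschitz with `C = (1 − |x₂|/(1−r₂))⁻¹`. -/
theorem repositioning_map_biLipschitz
    {D : ℕ} (x₂ : EuclideanSpace ℝ (Fin D)) (r₂ : ℝ) (hr : 0 < r₂)
    (h1 : ‖x₂‖ + r₂ < 1) :
    Set.MapsTo
        (fun x : EuclideanSpace ℝ (Fin D) =>
          if ‖x‖ ≤ r₂ then x + x₂ else x + ((1 - ‖x‖) / (1 - r₂)) • x₂)
        (closedBall (0 : EuclideanSpace ℝ (Fin D)) 1)
        (closedBall (0 : EuclideanSpace ℝ (Fin D)) 1) ∧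
    (∀ x : EuclideanSpace ℝ (Fin D), ‖x‖ ≤ r₂ →
      (if ‖x‖ ≤ r₂ then x + x₂ else x + ((1 - ‖x‖) / (1 - r₂)) • x₂) = x + x₂) ∧
    (∀ x : EuclideanSpace ℝ (Fin D), ‖x‖ = 1 →
      (if ‖x‖ ≤ r₂ then x + x₂ else x + ((1 - ‖x‖) / (1 - r₂)) • x₂) = x) ∧
    (∀ x ∈ closedBall (0 : EuclideanSpace ℝ (Fin D)) 1,
      ∀ y ∈ closedBall (0 : EuclideanSpace ℝ (Fin D)) 1,
        (1 - ‖x₂‖ / (1 - r₂)) * ‖x - y‖ ≤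
          ‖(if ‖x‖ ≤ r₂ then x + x₂ else x + ((1 - ‖x‖) / (1 - r₂)) • x₂)
            - (if ‖y‖ ≤ r₂ then y + x₂ else y + ((1 - ‖y‖) / (1 - r₂)) • x₂)‖ ∧
          ‖(if ‖x‖ ≤ r₂ then x + x₂ else x + ((1 - ‖x‖) / (1 - r₂)) • x₂)
            - (if ‖y‖ ≤ r₂ then y + x₂ else y + ((1 - ‖y‖) / (1 - r₂)) • x₂)‖ ≤
          (1 - ‖x₂‖ / (1 - r₂))⁻¹ * ‖x - y‖) := by
  have hc : (0:ℝ) < 1 - r₂ := by linarith [norm_nonneg x₂]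
  have hr1 : r₂ < 1 := by have := norm_nonneg x₂; linarith
  set a : ℝ := ‖x₂‖ / (1 - r₂) with ha_def
  have ha0 : 0 ≤ a := div_nonneg (norm_nonneg _) hc.le
  have ha1 : a < 1 := by rw [ha_def, div_lt_one hc]; linarith
  -- rewrite the map uniformly
  have hrw : ∀ x : EuclideanSpace ℝ (Fin D),
      (if ‖x‖ ≤ r₂ then x + x₂ else x + ((1 - ‖x‖) / (1 - r₂)) • x₂)
        = x + (if ‖x‖ ≤ r₂ then (1:ℝ) else (1 - ‖x‖) / (1 - r₂)) • x₂ := by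
    intro x; split_ifs <;> simp
  refine ⟨?_, ?_, ?_, ?_⟩
  · intro x hx
    simp only [mem_closedBall, dist_zero_right] at hx ⊢
    split_ifs with h
    · calc ‖x + x₂‖ ≤ ‖x‖ + ‖x₂‖ := norm_add_le _ _
        _ ≤ 1 := by linarith
    · push_neg at h
      have hx1 : 1 - ‖x‖ ≥ 0 := by linarith
      calc ‖x + ((1 - ‖x‖) / (1 - r₂)) • x₂‖
          ≤ ‖x‖ + ((1 - ‖x‖) / (1 - r₂)) * ‖x₂‖ := by
            refine (norm_add_le _ _).trans ?_
            rw [norm_smul, Real.norm_eq_abs, abs_of_nonneg (by positivity)]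
        _ ≤ ‖x‖ + ((1 - ‖x‖) / (1 - r₂)) * (1 - r₂) := by gcongr; linarith
        _ = 1 := by field_simp; ring
  · intro x hx; simp [hx]
  · intro x hx
    have : ¬ ‖x‖ ≤ r₂ := by rw [hx]; linarith
    rw [if_neg this, hx]; simp
  · intro x hx y hy
    simp only [mem_closedBall, dist_zero_right] at hx hy
    rw [hrw x, hrw y]
    set gx : ℝ := if ‖x‖ ≤ r₂ then (1:ℝ) else (1 - ‖x‖) / (1 - r₂) with hgx
    set gy : ℝ := if ‖y‖ ≤ r₂ then (1:ℝ) else (1 - ‖y‖) / (1 - r₂) with hgy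
    have hdiff : x + gx • x₂ - (y + gy • x₂) = (x - y) + (gx - gy) • x₂ := by
      rw [sub_smul]; abel
    rw [hdiff]
    have hkey : |gx - gy| ≤ ‖x - y‖ / (1 - r₂) := by
      refine (gdiff_aux r₂ hr1 ‖x‖ ‖y‖).trans ?_
      gcongr
      exact abs_norm_sub_norm_le x y
    have hnv : ‖(gx - gy) • x₂‖ ≤ a * ‖x - y‖ := by
      rw [norm_smul, Real.norm_eq_abs]
      calc |gx - gy| * ‖x₂‖ ≤ (‖x - y‖ / (1 - r₂)) * ‖x₂‖ := by
            gcongr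
        _ = a * ‖x - y‖ := by rw [ha_def]; ring
    constructor
    · have hlow : ‖x - y‖ - ‖(gx - gy) • x₂‖ ≤ ‖(x - y) + (gx - gy) • x₂‖ := by
        have h := norm_add_le ((x - y) + (gx - gy) • x₂) (-((gx - gy) • x₂))
        simp only [add_neg_cancel_right, norm_neg] at h
        linarith
      have : (1 - a) * ‖x - y‖ ≤ ‖x - y‖ - ‖(gx - gy) • x₂‖ := by nlinarith
      linarith
    · have hup : ‖(x - y) + (gx - gy) • x₂‖ ≤ (1 + a) * ‖x - y‖ := by
        calc ‖(x - y) + (gx - gy) • x₂‖ ≤ ‖x - y‖ + ‖(gx - gy) • x₂‖ := norm_add_le _ _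
          _ ≤ ‖x - y‖ + a * ‖x - y‖ := by linarith
          _ = (1 + a) * ‖x - y‖ := by ring
      have h1a : (0:ℝ) < 1 - a := by linarith
      have hinv : (1 + a) ≤ (1 - a)⁻¹ := by
        rw [inv_eq_one_div, le_div_iff₀ h1a]; nlinarith
      calc ‖(x - y) + (gx - gy) • x₂‖ ≤ (1 + a) * ‖x - y‖ := hup
        _ ≤ (1 - a)⁻¹ * ‖x - y‖ := by gcongr
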